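/- For all integers 1 ≤ k < n, the direct product S_k × S_{n−k} of symmetric groups (with k ≥ 2 and n−k ≥ 2) can be generated by two elements. Specifically, it is generated by ((1,2), x) and (y, (1,2)), where x is the cycle (α, α+1, …, n−k) with α = 1 if n−k is odd and α = 2 otherwise, and y is the cycle (β, β+1, …, k) with β = 1 if k is odd and β = 2 otherwise. -/

import Mathlib

open Equiv Equiv.Perm List Subgroup

private lemma aux_swap_closure {m : ℕ} (hm : 2 ≤ m) (H : Subgroup (Equiv.Perm (Fin m)))
    (hj : ∀ j : Fin m, j ≠ ⟨0, by omega⟩ → Equiv.swap (⟨0, by omega⟩ : Fin m) j ∈ H) :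
    H = ⊤ := by
  rw [eq_top_iff, ← Equiv.Perm.closure_isSwap, Subgroup.closure_le]
  rintro σ ⟨a, b, hab, rfl⟩
  by_cases ha : a = (⟨0, by omega⟩ : Fin m)
  · subst ha
    exact hj b (fun h => hab h.symm)
  by_cases hb : b = (⟨0, by omega⟩ : Fin m)
  · subst hb
    rw [Equiv.swap_comm]
    exact hj a ha
  · have key := Equiv.swap_mul_swap_mul_swap (x := a) (y := (⟨0, by omega⟩ : Fin m))
      (z := b) ha hab
    have : Equiv.swap a b = Equiv.swap (⟨0, by omega⟩ : Fin m) b *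
        Equiv.swap (⟨0, by omega⟩ : Fin m) a * Equiv.swap (⟨0, by omega⟩ : Fin m) b := by
      rw [Equiv.swap_comm a (⟨0, by omega⟩ : Fin m)] at key
      rw [key, Equiv.swap_comm b a]
    rw [this]
    exact H.mul_mem (H.mul_mem (hj b hb) (hj a ha)) (hj b hb)

private lemma aux_conj_swap {m : ℕ} (f : Equiv.Perm (Fin m)) (z o j : Fin m) (i : ℤ)
    (hz : (f ^ i) z = z) (hi : (f ^ i) o = j) (H : Subgroup (Equiv.Perm (Fin m)))
    (hf : f ∈ H) (hs : Equiv.swap z o ∈ H) : Equiv.swap z j ∈ H := by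
  have : Equiv.swap z j = (f ^ i) * Equiv.swap z o * (f ^ i)⁻¹ := by
    rw [← Equiv.swap_apply_apply, hz, hi]
  rw [this]
  exact H.mul_mem (H.mul_mem (H.zpow_mem hf i) hs) (H.inv_mem (H.zpow_mem hf i))

private lemma even_closure {m : ℕ} (hm : 2 ≤ m) (l : List (Fin m)) (hl : l.Nodup)
    (hlen : l.length + 1 = m)
    (hmem : ∀ j : Fin m, j ∈ l ↔ j ≠ ⟨0, by omega⟩) :
    Subgroup.closure
      ({Equiv.swap (⟨0, by omega⟩ : Fin m) ⟨1, by omega⟩, List.formPerm l} :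
        Set (Equiv.Perm (Fin m))) = ⊤ := by
  have h0fix : List.formPerm l (⟨0, by omega⟩ : Fin m) = ⟨0, by omega⟩ :=
    List.formPerm_apply_of_notMem (fun h => (hmem _).mp h rfl)
  apply aux_swap_closure hm
  intro j hj0
  by_cases hj1 : j = (⟨1, by omega⟩ : Fin m)
  · subst hj1
    exact subset_closure (Set.mem_insert _ _)
  · have hjv0 : (j : ℕ) ≠ 0 := fun h => hj0 (Fin.ext h)
    have hjv1 : (j : ℕ) ≠ 1 := fun h => hj1 (Fin.ext h)
    have hm3 : 3 ≤ m := by have := j.isLt; omega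
    have hlen2 : 2 ≤ l.length := by omega
    have hfp : List.formPerm l ∈ Subgroup.closure
        ({Equiv.swap (⟨0, by omega⟩ : Fin m) ⟨1, by omega⟩, List.formPerm l} :
          Set (Equiv.Perm (Fin m))) :=
      subset_closure (Set.mem_insert_of_mem _ rfl)
    have hsw : Equiv.swap (⟨0, by omega⟩ : Fin m) ⟨1, by omega⟩ ∈ Subgroup.closure
        ({Equiv.swap (⟨0, by omega⟩ : Fin m) ⟨1, by omega⟩, List.formPerm l} :
          Set (Equiv.Perm (Fin m))) :=
      subset_closure (Set.mem_insert _ _)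
    have hx : IsCycle (List.formPerm l) := List.isCycle_formPerm hl hlen2
    have h1mem : (⟨1, by omega⟩ : Fin m) ∈ l :=
      (hmem _).mpr (fun h => by simpa using congrArg Fin.val h)
    have hjmem : j ∈ l := (hmem j).mpr hj0
    have hone : List.formPerm l (⟨1, by omega⟩ : Fin m) ≠ ⟨1, by omega⟩ :=
      (List.formPerm_apply_mem_ne_self_iff l hl _ h1mem).mpr hlen2
    have hjne : List.formPerm l j ≠ j :=
      (List.formPerm_apply_mem_ne_self_iff l hl _ hjmem).mpr hlen2
    obtain ⟨i, hi⟩ := hx.sameCycle hone hjne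
    exact aux_conj_swap (List.formPerm l) _ _ j i
      (Equiv.Perm.zpow_apply_eq_self_of_apply_eq_self h0fix i) hi _ hfp hsw

private lemma key_lemma (m : ℕ) (hm : 2 ≤ m) :
    Subgroup.closure
      ({Equiv.swap (⟨0, by omega⟩ : Fin m) ⟨1, by omega⟩,
        if Odd m then List.formPerm (List.finRange m)
        else List.formPerm ((List.finRange m).drop 1)} : Set (Equiv.Perm (Fin m))) = ⊤ ∧
    ∃ r : ℕ, Odd r ∧
      (if Odd m then List.formPerm (List.finRange m)
        else List.formPerm ((List.finRange m).drop 1)) ^ r = 1 := by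
  by_cases hodd : Odd m
  · rw [if_pos hodd]
    refine ⟨?_, m, hodd, ?_⟩
    · have h1 : IsCycle (formPerm (finRange m)) :=
        isCycle_formPerm (nodup_finRange m) (by simpa using hm)
      have h2 : (formPerm (finRange m)).support = Finset.univ := by
        rw [support_formPerm_of_nodup _ (nodup_finRange m) ?_, toFinset_finRange]
        intro x hx
        have := congrArg List.length hx
        simp at this
        omega
      have h0 : formPerm (finRange m) ⟨0, by omega⟩ = ⟨1, by omega⟩ := by
        have := formPerm_apply_getElem (finRange m) (nodup_finRange m) 0 (by simpa using by omega)
        simpa [Nat.mod_eq_of_lt (show 1 < m by omega)] using this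
      rw [Set.pair_comm, ← h0]
      exact closure_cycle_adjacent_swap h1 h2 _
    · have := formPerm_pow_length_eq_one_of_nodup (finRange m) (nodup_finRange m)
      simp only [length_finRange] at this
      exact this
  · rw [if_neg hodd]
    obtain ⟨m', rfl⟩ : ∃ m', m = m' + 1 := ⟨m - 1, by omega⟩
    have hl : ((finRange (m' + 1)).drop 1).Nodup :=
      (List.drop_sublist 1 _).nodup (nodup_finRange _)
    have hlen : ((finRange (m' + 1)).drop 1).length + 1 = m' + 1 := by simp
    have hmem : ∀ j : Fin (m' + 1), j ∈ (finRange (m' + 1)).drop 1 ↔ j ≠ ⟨0, by omega⟩ := by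
      intro j
      simp only [List.finRange_succ, List.drop_succ_cons, List.drop_zero]
      simp only [List.mem_map, List.mem_finRange, true_and, ne_eq, Fin.ext_iff, Fin.val_succ]
      constructor
      · rintro ⟨a, ha⟩
        omega
      · intro h
        refine ⟨⟨(j : ℕ) - 1, by omega⟩, ?_⟩
        show (j : ℕ) - 1 + 1 = (j : ℕ)
        omega
    refine ⟨even_closure hm _ hl hlen hmem, m', ?_, ?_⟩
    · rcases Nat.even_or_odd m' with h | h
      · exact absurd (by simpa using Even.add_one h) hodd
      · exact h
    · have := formPerm_pow_length_eq_one_of_nodup ((finRange (m' + 1)).drop 1) hl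
      simp only [length_drop, length_finRange] at this
      simpa using this

theorem stmt_9 (n k : ℕ) (hk : 2 ≤ k) (hnk : 2 ≤ n - k) (hkn : k < n) :
    Subgroup.closure
      {((Equiv.swap (⟨0, by omega⟩ : Fin k) ⟨1, by omega⟩,
          if Odd (n - k) then List.formPerm (List.finRange (n - k))
          else List.formPerm ((List.finRange (n - k)).drop 1)) :
            Equiv.Perm (Fin k) × Equiv.Perm (Fin (n - k))),
       ((if Odd k then List.formPerm (List.finRange k)
          else List.formPerm ((List.finRange k).drop 1)),
         Equiv.swap (⟨0, by omega⟩ : Fin (n - k)) ⟨1, by omega⟩)} = ⊤ := by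
  obtain ⟨hB, r, hr, hxr⟩ := key_lemma (n - k) hnk
  obtain ⟨hA, q, hq, hyq⟩ := key_lemma k hk
  set s : Equiv.Perm (Fin k) := Equiv.swap ⟨0, by omega⟩ ⟨1, by omega⟩ with hs_def
  set t : Equiv.Perm (Fin (n - k)) := Equiv.swap ⟨0, by omega⟩ ⟨1, by omega⟩ with ht_def
  set x : Equiv.Perm (Fin (n - k)) :=
    if Odd (n - k) then List.formPerm (List.finRange (n - k))
    else List.formPerm ((List.finRange (n - k)).drop 1) with hx_def
  set y : Equiv.Perm (Fin k) :=
    if Odd k then List.formPerm (List.finRange k)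
    else List.formPerm ((List.finRange k).drop 1) with hy_def
  set C := Subgroup.closure {((s, x) : Equiv.Perm (Fin k) × Equiv.Perm (Fin (n - k))), (y, t)}
    with hC_def
  have ha : ((s, x) : Equiv.Perm (Fin k) × Equiv.Perm (Fin (n - k))) ∈ C :=
    subset_closure (Set.mem_insert _ _)
  have hb : ((y, t) : Equiv.Perm (Fin k) × Equiv.Perm (Fin (n - k))) ∈ C :=
    subset_closure (Set.mem_insert_of_mem _ rfl)
  have swap_odd_pow : ∀ {α : Type} [inst : DecidableEq α] (a b : α) (j : ℕ),
      Odd j → Equiv.swap a b ^ j = Equiv.swap a b := by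
    intro α _ a b j hj
    obtain ⟨c, rfl⟩ := hj
    rw [pow_add, pow_mul, sq, Equiv.swap_mul_self, one_pow, one_mul, pow_one]
  have hsr : ((s, x) : Equiv.Perm (Fin k) × Equiv.Perm (Fin (n - k))) ^ r = (s, 1) := by
    ext1
    · simp [swap_odd_pow _ _ r hr, hs_def]
    · simp [hxr]
  have htq : ((y, t) : Equiv.Perm (Fin k) × Equiv.Perm (Fin (n - k))) ^ q = (1, t) := by
    ext1
    · simp [hyq]
    · simp [swap_odd_pow _ _ q hq, ht_def]
  have hs1 : ((s, (1 : Equiv.Perm (Fin (n - k)))) : _ × _) ∈ C := hsr ▸ C.pow_mem ha r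
  have ht1 : (((1 : Equiv.Perm (Fin k)), t) : _ × _) ∈ C := htq ▸ C.pow_mem hb q
  have h1x : (((1 : Equiv.Perm (Fin k)), x) : _ × _) ∈ C := by
    have := C.mul_mem (C.inv_mem hs1) ha
    simpa [Prod.mk_mul_mk] using this
  have hy1 : ((y, (1 : Equiv.Perm (Fin (n - k)))) : _ × _) ∈ C := by
    have := C.mul_mem hb (C.inv_mem ht1)
    simpa [Prod.mk_mul_mk] using this
  have hleft : ∀ g : Equiv.Perm (Fin k), ((g, (1 : Equiv.Perm (Fin (n - k)))) : _ × _) ∈ C := by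
    intro g
    have h1 : ((g, (1 : Equiv.Perm (Fin (n - k)))) : _ × _) ∈
        Subgroup.map (MonoidHom.inl _ _) ⊤ := ⟨g, trivial, rfl⟩
    rw [← hA, MonoidHom.map_closure, Set.image_pair] at h1
    have hle : Subgroup.closure {(MonoidHom.inl (Equiv.Perm (Fin k)) (Equiv.Perm (Fin (n - k)))) s,
        (MonoidHom.inl _ _) y} ≤ C := by
      rw [Subgroup.closure_le]
      rintro p (rfl | rfl)
      · exact hs1
      · exact hy1
    exact hle h1
  have hright : ∀ h : Equiv.Perm (Fin (n - k)),
      (((1 : Equiv.Perm (Fin k)), h) : _ × _) ∈ C := by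
    intro h
    have h1 : (((1 : Equiv.Perm (Fin k)), h) : _ × _) ∈
        Subgroup.map (MonoidHom.inr _ _) ⊤ := ⟨h, trivial, rfl⟩
    rw [← hB, MonoidHom.map_closure, Set.image_pair] at h1
    have hle : Subgroup.closure {(MonoidHom.inr (Equiv.Perm (Fin k)) (Equiv.Perm (Fin (n - k)))) t,
        (MonoidHom.inr _ _) x} ≤ C := by
      rw [Subgroup.closure_le]
      rintro p (rfl | rfl)
      · exact ht1
      · exact h1x
    exact hle h1
  rw [eq_top_iff]
  rintro ⟨g, h⟩ -
  have : ((g, h) : _ × _) = (g, 1) * (1, h) := by simp [Prod.mk_mul_mk]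
  rw [this]
  exact C.mul_mem (hleft g) (hright h)
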